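/- The transformation u₃: (x,y,z,w) ↦ (xD/D', yD'/D, zD/D', wD'/D), where D = xy+zw-α₁ and D' = xy+zw-α₁-α₃, is an involution after the parameter change (α₁,α₃) ↦ (α₁+α₃,-α₃): applying it twice (with parameters updated each time) gives the identity on the open set where D, D' ≠ 0. -/

import Mathlib

/-- The transformation u₃ depending on parameters α₁, α₃. -/
noncomputable def u3 (α₁ α₃ : ℂ) (p : ℂ × ℂ × ℂ × ℂ) : ℂ × ℂ × ℂ × ℂ :=
  let D := p.1 * p.2.1 + p.2.2.1 * p.2.2.2 - α₁
  let D' := p.1 * p.2.1 + p.2.2.1 * p.2.2.2 - α₁ - α₃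
  (p.1 * D / D', p.2.1 * D' / D, p.2.2.1 * D / D', p.2.2.2 * D' / D)

/-- u₃ together with the parameter change (α₁,α₃) ↦ (α₁+α₃, -α₃) is an involution
on the open set D ≠ 0, D' ≠ 0. -/
theorem u3_involutive (α₁ α₃ : ℂ) (p : ℂ × ℂ × ℂ × ℂ)
    (hD : p.1 * p.2.1 + p.2.2.1 * p.2.2.2 - α₁ ≠ 0)
    (hD' : p.1 * p.2.1 + p.2.2.1 * p.2.2.2 - α₁ - α₃ ≠ 0) :
    u3 (α₁ + α₃) (-α₃) (u3 α₁ α₃ p) = p := by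
  obtain ⟨x, y, z, w⟩ := p
  simp only [u3] at *
  have hprod : x * (x * y + z * w - α₁) / (x * y + z * w - α₁ - α₃) *
      (y * (x * y + z * w - α₁ - α₃) / (x * y + z * w - α₁)) +
      z * (x * y + z * w - α₁) / (x * y + z * w - α₁ - α₃) *
      (w * (x * y + z * w - α₁ - α₃) / (x * y + z * w - α₁)) = x * y + z * w := by
    field_simp
  simp only [hprod]
  have h1 : x * y + z * w - (α₁ + α₃) = x * y + z * w - α₁ - α₃ := by ring
  have h2 : x * y + z * w - α₁ - α₃ - -α₃ = x * y + z * w - α₁ := by ring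
  rw [h1, h2]
  refine Prod.ext ?_ (Prod.ext ?_ (Prod.ext ?_ ?_)) <;>
    field_simp
  · rw [mul_assoc]
    exact mul_div_cancel_right₀ y (mul_ne_zero (by rwa [mul_comm y x]) (by rwa [mul_comm y x]))
  · rw [mul_assoc]
    exact mul_div_cancel_right₀ w (mul_ne_zero (by rwa [mul_comm w z]) (by rwa [mul_comm w z]))
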